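/- Fix s ≥ 3 and n, and identify each of s pairwise-disjoint sets V_1,…,V_s with [n]. Let B ⊆ [n/s] have no nontrivial solution to y_1 + y_2 = 2y_3 in B. For x = (x_1,…,x_{s-2}) ∈ [n/s]^{s-2} and y ∈ B, let K_{x,y} be the s-vertex set with i-th vertex x_i ∈ V_i for 1 ≤ i ≤ s-2, vertex y + x_1 + ⋯ + x_{s-2} ∈ V_{s-1}, and vertex 2y + x_1 + ⋯ + x_{s-2} ∈ V_s. Then the sets K_{x,y} are pairwise (s-1)-disjoint: any two distinct such sets agree in at most s-2 of the s parts. -/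

import Mathlib

/-- The sets K_{x,y} (with i-th vertex x_i for i < s-2, then y + Σx_i, then
2y + Σx_i) are pairwise (s-1)-disjoint: if two of them agree in at least s-1
of the s parts, then their parameters coincide. -/
theorem stmt_12 (s n : ℕ) (hs : 3 ≤ s) (B : Finset ℕ)
    (hB : B ⊆ Finset.Icc 1 (n / s))
    (hBsol : ∀ y₁ ∈ B, ∀ y₂ ∈ B, ∀ y₃ ∈ B, y₁ + y₂ = 2 * y₃ →
      y₁ = y₂ ∧ y₂ = y₃)
    (K : (ℕ → ℕ) → ℕ → ℕ → ℕ)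
    (hK : ∀ x y i, K x y i =
      if i < s - 2 then x i
      else if i = s - 2 then y + ∑ j ∈ Finset.range (s - 2), x j
      else 2 * y + ∑ j ∈ Finset.range (s - 2), x j)
    (x x' : ℕ → ℕ) (y y' : ℕ)
    (hx : ∀ i < s - 2, x i ∈ Finset.Icc 1 (n / s))
    (hx' : ∀ i < s - 2, x' i ∈ Finset.Icc 1 (n / s))
    (hy : y ∈ B) (hy' : y' ∈ B)
    (hagree : s - 1 ≤ ((Finset.range s).filter fun i => K x y i = K x' y' i).card) :
    (∀ i < s - 2, x i = x' i) ∧ y = y' := by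
  have hK1 : ∀ z (w : ℕ → ℕ), ∀ i < s - 2, K w z i = w i := by
    intro z w i hi; rw [hK]; simp [hi]
  have hK2 : ∀ z (w : ℕ → ℕ), K w z (s - 2) = z + ∑ j ∈ Finset.range (s - 2), w j := by
    intro z w; rw [hK]; simp
  have hK3 : ∀ z (w : ℕ → ℕ), K w z (s - 1) = 2 * z + ∑ j ∈ Finset.range (s - 2), w j := by
    intro z w; rw [hK]
    have h1 : ¬ (s - 1 < s - 2) := by omega
    have h2 : s - 1 ≠ s - 2 := by omega
    simp [h1, h2]
  have hneg : ((Finset.range s).filter fun i => ¬ K x y i = K x' y' i).card ≤ 1 := by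
    have := Finset.card_filter_add_card_filter_not
      (s := Finset.range s) (p := fun i => K x y i = K x' y' i)
    rw [Finset.card_range] at this
    omega
  have pair : ∀ i j, i < s → j < s → i ≠ j → ¬ K x y i = K x' y' i →
      K x y j = K x' y' j := by
    intro i j hi hj hij hKi
    by_contra hKj
    have hsub : ({i, j} : Finset ℕ) ⊆
        (Finset.range s).filter fun k => ¬ K x y k = K x' y' k := by
      intro k hk
      simp only [Finset.mem_insert, Finset.mem_singleton] at hk
      rcases hk with rfl | rfl <;> simp [Finset.mem_filter, Finset.mem_range, hi, hj, hKi, hKj]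
    have := Finset.card_le_card hsub
    rw [Finset.card_pair hij] at this
    omega
  have hne : s - 2 ≠ s - 1 := by omega
  by_cases h2 : K x y (s - 2) = K x' y' (s - 2)
  · by_cases h3 : K x y (s - 1) = K x' y' (s - 1)
    · rw [hK2, hK2] at h2
      rw [hK3, hK3] at h3
      have hyy : y = y' := by omega
      have hSS : ∑ j ∈ Finset.range (s - 2), x j = ∑ j ∈ Finset.range (s - 2), x' j := by
        omega
      refine ⟨?_, hyy⟩
      intro i hi
      by_cases hxi : x i = x' i
      · exact hxi
      · have hall : ∀ j ∈ (Finset.range (s - 2)).erase i, x j = x' j := by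
          intro j hj
          rw [Finset.mem_erase, Finset.mem_range] at hj
          have hKi : ¬ K x y i = K x' y' i := by
            rw [hK1 y x i hi, hK1 y' x' i hi]; exact hxi
          have := pair i j (by omega) (by omega) (Ne.symm hj.1) hKi
          rwa [hK1 y x j hj.2, hK1 y' x' j hj.2] at this
        have e1 := Finset.add_sum_erase (Finset.range (s - 2)) x (Finset.mem_range.mpr hi)
        have e2 := Finset.add_sum_erase (Finset.range (s - 2)) x' (Finset.mem_range.mpr hi)
        have e3 : ∑ j ∈ (Finset.range (s - 2)).erase i, x j =
            ∑ j ∈ (Finset.range (s - 2)).erase i, x' j :=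
          Finset.sum_congr rfl hall
        omega
    · have hxall : ∀ i < s - 2, x i = x' i := by
        intro i hi
        have := pair (s - 1) i (by omega) (by omega) (by omega) h3
        rwa [hK1 y x i hi, hK1 y' x' i hi] at this
      have hSS : ∑ j ∈ Finset.range (s - 2), x j = ∑ j ∈ Finset.range (s - 2), x' j :=
        Finset.sum_congr rfl fun j hj => hxall j (Finset.mem_range.mp hj)
      rw [hK2, hK2] at h2
      exact ⟨hxall, by omega⟩
  · have hxall : ∀ i < s - 2, x i = x' i := by
      intro i hi
      have := pair (s - 2) i (by omega) (by omega) (by omega) h2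
      rwa [hK1 y x i hi, hK1 y' x' i hi] at this
    have hSS : ∑ j ∈ Finset.range (s - 2), x j = ∑ j ∈ Finset.range (s - 2), x' j :=
      Finset.sum_congr rfl fun j hj => hxall j (Finset.mem_range.mp hj)
    have h3 := pair (s - 2) (s - 1) (by omega) (by omega) hne h2
    rw [hK3, hK3] at h3
    exact ⟨hxall, by omega⟩
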